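/- Let Z_1, …, Z_n be random variables and f_1, …, f_n deterministic functions on their respective ranges. Let A, B, D ⊆ [n] be pairwise disjoint subsets and let A' ⊆ A and B' ⊆ B be such that the random variables (f_i(Z_i))_{i ∈ (A∪B)\(A'∪B')} are mutually conditionally independent given f_D(Z_D). Then I(f_A(Z_A); f_B(Z_B) | f_D(Z_D)) ≤ H(f_{A'}(Z_{A'}) | f_D(Z_D)) + H(f_{B'}(Z_{B'}) | f_D(Z_D)). -/

import Mathlib

open Finset

open scoped Classical in
/-- Probability that the random variable `X` takes the value `s`, under the
probability mass function `p` on the finite sample space `Ω`. -/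
noncomputable def prEq {Ω : Type*} [Fintype Ω] {S : Type*} (p : Ω → ℝ) (X : Ω → S) (s : S) : ℝ :=
  ∑ ω, if X ω = s then p ω else 0

/-- Shannon entropy `H(X)` of the random variable `X` under the pmf `p`. -/
noncomputable def entropy {Ω : Type*} [Fintype Ω] {S : Type*} (p : Ω → ℝ) (X : Ω → S) : ℝ :=
  -∑ ω, p ω * Real.log (prEq p X (X ω))

/-- Conditional entropy `H(X | Y) = H(X, Y) - H(Y)`. -/
noncomputable def condEntropy {Ω : Type*} [Fintype Ω] {S T : Type*}
    (p : Ω → ℝ) (X : Ω → S) (Y : Ω → T) : ℝ :=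
  entropy p (fun ω => (X ω, Y ω)) - entropy p Y

/-- Conditional mutual information `I(X ; Y | Z) = H(X|Z) + H(Y|Z) - H(X,Y|Z)`. -/
noncomputable def condMI {Ω : Type*} [Fintype Ω] {S T U : Type*}
    (p : Ω → ℝ) (X : Ω → S) (Y : Ω → T) (Z : Ω → U) : ℝ :=
  condEntropy p X Z + condEntropy p Y Z - condEntropy p (fun ω => (X ω, Y ω)) Z

/-- The tuple of random variables `(Z i)_{i ∈ A}`, as a single random variable. -/
def tupleOn {Ω : Type*} {ι : Type*} {S : ι → Type*}
    (Z : (i : ι) → Ω → S i) (A : Finset ι) (ω : Ω) :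
    ∀ i : {x : ι // x ∈ A}, S i.1 := fun i => Z i.1 ω

section Lemmas
open scoped Classical
variable {Ω : Type*} [Fintype Ω] {S T U : Type*} {p : Ω → ℝ}

lemma prEq_nonneg (hp0 : ∀ ω, 0 ≤ p ω) (X : Ω → S) (s : S) : 0 ≤ prEq p X s := by
  unfold prEq; apply Finset.sum_nonneg; intro ω _; split <;> simp [hp0 ω]

lemma prEq_le (hp0 : ∀ ω, 0 ≤ p ω) {X : Ω → S} {Y : Ω → T} {ω : Ω}
    (h : ∀ ω', X ω' = X ω → Y ω' = Y ω) :
    prEq p X (X ω) ≤ prEq p Y (Y ω) := by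
  unfold prEq
  apply Finset.sum_le_sum
  intro ω' _
  by_cases hx : X ω' = X ω
  · simp [hx, h ω' hx]
  · simp only [hx, if_false]; split <;> simp [hp0 ω']

lemma le_prEq_self (hp0 : ∀ ω, 0 ≤ p ω) (X : Ω → S) (ω : Ω) : p ω ≤ prEq p X (X ω) := by
  unfold prEq
  have := Finset.single_le_sum (f := fun ω' => if X ω' = X ω then p ω' else 0)
    (fun ω' _ => by split <;> simp [hp0 ω']) (Finset.mem_univ ω)
  simpa using this

lemma prEq_self_pos (hp0 : ∀ ω, 0 ≤ p ω) (X : Ω → S) {ω : Ω} (hω : 0 < p ω) :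
    0 < prEq p X (X ω) := lt_of_lt_of_le hω (le_prEq_self hp0 X ω)

lemma prEq_congr {X : Ω → S} {Y : Ω → T} {ω : Ω}
    (h : ∀ ω', X ω' = X ω ↔ Y ω' = Y ω) :
    prEq p X (X ω) = prEq p Y (Y ω) := by
  unfold prEq
  apply Finset.sum_congr rfl
  intro ω' _
  by_cases hx : X ω' = X ω
  · simp [hx, (h ω').1 hx]
  · simp only [hx, if_false]
    rw [if_neg (fun hy => hx ((h ω').2 hy))]

lemma entropy_congr {X : Ω → S} {Y : Ω → T}
    (h : ∀ ω ω', X ω' = X ω ↔ Y ω' = Y ω) : entropy p X = entropy p Y := by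
  unfold entropy
  congr 1
  apply Finset.sum_congr rfl
  intro ω _
  rw [prEq_congr (h ω)]

lemma entropy_mono (hp0 : ∀ ω, 0 ≤ p ω) {X : Ω → S} {Y : Ω → T}
    (h : ∀ ω ω', X ω' = X ω → Y ω' = Y ω) : entropy p Y ≤ entropy p X := by
  unfold entropy
  rw [neg_le_neg_iff]
  apply Finset.sum_le_sum
  intro ω _
  rcases eq_or_lt_of_le (hp0 ω) with h0 | h0
  · simp [← h0]
  · apply mul_le_mul_of_nonneg_left _ (hp0 ω)
    apply Real.log_le_log (prEq_self_pos hp0 X h0)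
    exact prEq_le hp0 (h ω)

lemma sum_mul_comp (p : Ω → ℝ) (X : Ω → S) (F : S → ℝ) {Φ : Finset S}
    (hΦ : ∀ ω, X ω ∈ Φ) :
    ∑ ω, p ω * F (X ω) = ∑ s ∈ Φ, prEq p X s * F s := by
  unfold prEq
  simp_rw [Finset.sum_mul]
  rw [Finset.sum_comm]
  apply Finset.sum_congr rfl
  intro ω _
  rw [Finset.sum_congr rfl (g := fun s => if s = X ω then p ω * F s else 0)
    (fun s _ => by
      by_cases h : X ω = s
      · simp [h]
      · have h2 : ¬ s = X ω := fun hs => h hs.symm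
        simp [h, h2])]
  rw [Finset.sum_ite_eq' Φ (X ω) (fun s => p ω * F s)]
  simp [hΦ ω]

lemma prEq_marginal (p : Ω → ℝ) (X : Ω → S) (Z : Ω → U) (z : U) {Φ : Finset S}
    (hΦ : ∀ ω, X ω ∈ Φ) :
    ∑ x ∈ Φ, prEq p (fun ω => (X ω, Z ω)) (x, z) = prEq p Z z := by
  unfold prEq
  rw [Finset.sum_comm]
  apply Finset.sum_congr rfl
  intro ω _
  rw [Finset.sum_congr rfl (g := fun x => if x = X ω then (if Z ω = z then p ω else 0) else 0)
    (fun x _ => by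
      by_cases h : x = X ω
      · subst h; simp [Prod.ext_iff]
      · simp [Prod.ext_iff, h, Ne.symm h])]
  rw [Finset.sum_ite_eq' Φ (X ω)]
  simp [hΦ ω]

lemma prEq_total (hp1 : ∑ ω, p ω = 1) (X : Ω → S) {Φ : Finset S}
    (hΦ : ∀ ω, X ω ∈ Φ) :
    ∑ s ∈ Φ, prEq p X s = 1 := by
  unfold prEq
  rw [Finset.sum_comm]
  rw [← hp1]
  apply Finset.sum_congr rfl
  intro ω _
  rw [Finset.sum_congr rfl (g := fun s => if s = X ω then p ω else 0)
    (fun s _ => by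
      by_cases h : X ω = s
      · simp [h]
      · simp [h, Ne.symm h])]
  rw [Finset.sum_ite_eq' Φ (X ω)]
  simp [hΦ ω]


lemma entropy_submod (hp0 : ∀ ω, 0 ≤ p ω) (hp1 : ∑ ω, p ω = 1)
    (X : Ω → S) (Y : Ω → T) (Z : Ω → U) :
    entropy p (fun ω => (X ω, Y ω, Z ω)) + entropy p Z
      ≤ entropy p (fun ω => (X ω, Z ω)) + entropy p (fun ω => (Y ω, Z ω)) := by
  set V : Ω → S × T × U := fun ω => (X ω, Y ω, Z ω) with hV
  set XZ : Ω → S × U := fun ω => (X ω, Z ω) with hXZ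
  set YZ : Ω → T × U := fun ω => (Y ω, Z ω) with hYZ
  set G : S × T × U → ℝ := fun v =>
    prEq p XZ (v.1, v.2.2) * prEq p YZ (v.2.1, v.2.2) / (prEq p V v * prEq p Z v.2.2) with hG
  have Knn : ∀ v : S × T × U,
      0 ≤ prEq p XZ (v.1, v.2.2) * prEq p YZ (v.2.1, v.2.2) / prEq p Z v.2.2 := fun v =>
    div_nonneg (mul_nonneg (prEq_nonneg hp0 _ _) (prEq_nonneg hp0 _ _)) (prEq_nonneg hp0 _ _)
  classical
  set Φ : Finset (S × T × U) :=
    (Finset.univ.image X) ×ˢ ((Finset.univ.image Y) ×ˢ (Finset.univ.image Z)) with hΦdef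
  have hΦ : ∀ ω, V ω ∈ Φ := by
    intro ω
    simp [hΦdef, Finset.mem_product, hV]
  have key : ∑ ω, p ω * G (V ω) ≤ 1 := by
    rw [sum_mul_comp p V G hΦ]
    have step1 : ∀ v : S × T × U,
        prEq p V v * G v ≤ prEq p XZ (v.1, v.2.2) * prEq p YZ (v.2.1, v.2.2) / prEq p Z v.2.2 := by
      intro v
      rcases eq_or_lt_of_le (prEq_nonneg hp0 V v) with h0 | h0
      · rw [← h0, zero_mul]; exact Knn v
      · rw [hG]
        dsimp only
        rw [← mul_div_assoc, mul_div_mul_left _ _ h0.ne']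
    refine le_trans (Finset.sum_le_sum (fun i _ => step1 i)) ?_
    rw [hΦdef, Finset.sum_product]
    simp_rw [Finset.sum_product]
    rw [Finset.sum_congr rfl (fun x _ => Finset.sum_comm), Finset.sum_comm]
    have hx : ∀ ω, X ω ∈ Finset.univ.image X :=
      fun ω => Finset.mem_image_of_mem X (Finset.mem_univ ω)
    have hy : ∀ ω, Y ω ∈ Finset.univ.image Y :=
      fun ω => Finset.mem_image_of_mem Y (Finset.mem_univ ω)
    have hz : ∀ ω, Z ω ∈ Finset.univ.image Z :=
      fun ω => Finset.mem_image_of_mem Z (Finset.mem_univ ω)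
    have inner : ∀ z ∈ Finset.univ.image Z,
        (∑ x ∈ Finset.univ.image X, ∑ y ∈ Finset.univ.image Y,
          prEq p XZ (x, z) * prEq p YZ (y, z) / prEq p Z z) ≤ prEq p Z z := by
      intro z _
      simp_rw [mul_div_assoc, ← Finset.mul_sum, ← Finset.sum_div, ← Finset.sum_mul]
      rw [hXZ, hYZ, prEq_marginal p X Z z hx, prEq_marginal p Y Z z hy]
      rcases eq_or_lt_of_le (prEq_nonneg hp0 Z z) with h0 | h0
      · rw [← h0]; simp
      · rw [div_self h0.ne', mul_one]
    refine le_trans (Finset.sum_le_sum inner) ?_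
    rw [prEq_total hp1 Z hz]
  have main : ∑ ω, p ω * Real.log (G (V ω)) ≤ 0 := by
    have h1 : ∀ ω, p ω * Real.log (G (V ω)) ≤ p ω * (G (V ω) - 1) := by
      intro ω
      rcases eq_or_lt_of_le (hp0 ω) with h0 | h0
      · rw [← h0]; simp
      · apply mul_le_mul_of_nonneg_left _ (hp0 ω)
        apply Real.log_le_sub_one_of_pos
        have h1 : 0 < prEq p XZ (XZ ω) := prEq_self_pos hp0 XZ h0
        have h2 : 0 < prEq p YZ (YZ ω) := prEq_self_pos hp0 YZ h0
        have h3 : 0 < prEq p V (V ω) := prEq_self_pos hp0 V h0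
        have h4 : 0 < prEq p Z (Z ω) := prEq_self_pos hp0 Z h0
        exact div_pos (mul_pos h1 h2) (mul_pos h3 h4)
    refine le_trans (Finset.sum_le_sum (fun ω _ => h1 ω)) ?_
    have h2 : ∑ ω, p ω * (G (V ω) - 1) = (∑ ω, p ω * G (V ω)) - 1 := by
      simp_rw [mul_sub, mul_one, Finset.sum_sub_distrib, hp1]
    rw [h2]
    linarith [key]
  have expand : ∀ ω : Ω, 0 < p ω → Real.log (G (V ω)) =
      Real.log (prEq p XZ (XZ ω)) + Real.log (prEq p YZ (YZ ω))
        - Real.log (prEq p V (V ω)) - Real.log (prEq p Z (Z ω)) := by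
    intro ω h0
    have h1 : 0 < prEq p XZ (XZ ω) := prEq_self_pos hp0 XZ h0
    have h2 : 0 < prEq p YZ (YZ ω) := prEq_self_pos hp0 YZ h0
    have h3 : 0 < prEq p V (V ω) := prEq_self_pos hp0 V h0
    have h4 : 0 < prEq p Z (Z ω) := prEq_self_pos hp0 Z h0
    show Real.log (prEq p XZ (XZ ω) * prEq p YZ (YZ ω) / (prEq p V (V ω) * prEq p Z (Z ω))) = _
    rw [Real.log_div (mul_pos h1 h2).ne' (mul_pos h3 h4).ne',
      Real.log_mul h1.ne' h2.ne', Real.log_mul h3.ne' h4.ne']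
    ring
  have hsum : ∑ ω, p ω * Real.log (G (V ω))
      = ∑ ω, (p ω * Real.log (prEq p XZ (XZ ω)) + p ω * Real.log (prEq p YZ (YZ ω))
          - p ω * Real.log (prEq p V (V ω)) - p ω * Real.log (prEq p Z (Z ω))) := by
    apply Finset.sum_congr rfl
    intro ω _
    rcases eq_or_lt_of_le (hp0 ω) with h0 | h0
    · rw [← h0]; ring
    · rw [expand ω h0]; ring
  rw [hsum, Finset.sum_sub_distrib, Finset.sum_sub_distrib, Finset.sum_add_distrib] at main
  unfold entropy
  linarith

end Lemmas

section Lemmas2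
open scoped Classical
variable {Ω : Type*} [Fintype Ω] {S T U : Type*} {p : Ω → ℝ}

lemma condEntropy_congr {X : Ω → S} {Y : Ω → T} {W : Ω → U}
    (h : ∀ ω ω', X ω' = X ω ↔ Y ω' = Y ω) :
    condEntropy p X W = condEntropy p Y W := by
  unfold condEntropy
  congr 1
  apply entropy_congr
  intro ω ω'
  simp only [Prod.mk.injEq]
  exact and_congr_left' (h ω ω')

lemma condEntropy_mono (hp0 : ∀ ω, 0 ≤ p ω) {X : Ω → S} {Y : Ω → T} {W : Ω → U}
    (h : ∀ ω ω', X ω' = X ω → Y ω' = Y ω) :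
    condEntropy p Y W ≤ condEntropy p X W := by
  unfold condEntropy
  apply sub_le_sub_right
  apply entropy_mono hp0
  intro ω ω' he
  simp only [Prod.mk.injEq] at he ⊢
  exact ⟨h ω ω' he.1, he.2⟩

lemma condEntropy_subadd (hp0 : ∀ ω, 0 ≤ p ω) (hp1 : ∑ ω, p ω = 1)
    (X : Ω → S) (Y : Ω → T) (W : Ω → U) :
    condEntropy p (fun ω => (X ω, Y ω)) W
      ≤ condEntropy p X W + condEntropy p Y W := by
  unfold condEntropy
  have hs := entropy_submod hp0 hp1 X Y W
  have he : entropy p (fun ω => ((X ω, Y ω), W ω)) = entropy p (fun ω => (X ω, Y ω, W ω)) := by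
    apply entropy_congr
    intro ω ω'
    simp only [Prod.mk.injEq]
    tauto
  linarith

lemma tupleOn_eq_iff {ι : Type*} {S : ι → Type*} (Z : ∀ i, Ω → S i) (C : Finset ι) (ω ω' : Ω) :
    tupleOn Z C ω = tupleOn Z C ω' ↔ ∀ i ∈ C, Z i ω = Z i ω' := by
  constructor
  · intro h i hi
    exact congrFun h ⟨i, hi⟩
  · intro h
    funext i
    exact h i.1 i.2

lemma condEntropy_tuple_union (hp0 : ∀ ω, 0 ≤ p ω) (hp1 : ∑ ω, p ω = 1)
    {ι : Type*} [DecidableEq ι] {S : ι → Type*} (g : ∀ i, Ω → S i) (C₁ C₂ : Finset ι) (W : Ω → U) :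
    condEntropy p (tupleOn g (C₁ ∪ C₂)) W
      ≤ condEntropy p (tupleOn g C₁) W + condEntropy p (tupleOn g C₂) W := by
  have h : condEntropy p (tupleOn g (C₁ ∪ C₂)) W
      = condEntropy p (fun ω => (tupleOn g C₁ ω, tupleOn g C₂ ω)) W := by
    apply condEntropy_congr
    intro ω ω'
    simp only [Prod.mk.injEq, tupleOn_eq_iff, Finset.forall_mem_union]
  rw [h]
  exact condEntropy_subadd hp0 hp1 _ _ W

lemma condEntropy_tuple_mono (hp0 : ∀ ω, 0 ≤ p ω)
    {ι : Type*} {S : ι → Type*} (g : ∀ i, Ω → S i) {C₁ C₂ : Finset ι} (h : C₁ ⊆ C₂) (W : Ω → U) :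
    condEntropy p (tupleOn g C₁) W ≤ condEntropy p (tupleOn g C₂) W := by
  apply condEntropy_mono hp0
  intro ω ω' he
  rw [tupleOn_eq_iff] at he ⊢
  exact fun i hi => he i (h hi)

lemma condEntropy_tuple_le_sum (hp0 : ∀ ω, 0 ≤ p ω) (hp1 : ∑ ω, p ω = 1)
    {ι : Type*} [DecidableEq ι] {S : ι → Type*} (g : ∀ i, Ω → S i) (C : Finset ι) (W : Ω → U) :
    condEntropy p (tupleOn g C) W ≤ ∑ i ∈ C, condEntropy p (g i) W := by
  induction C using Finset.induction with
  | empty =>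
    rw [Finset.sum_empty]
    have h : entropy p (fun ω => (tupleOn g (∅ : Finset ι) ω, W ω)) = entropy p W := by
      apply entropy_congr
      intro ω ω'
      simp only [Prod.mk.injEq]
      constructor
      · exact fun h => h.2
      · intro h
        refine ⟨?_, h⟩
        funext i
        exact absurd i.2 (Finset.notMem_empty _)
    unfold condEntropy
    rw [h]
    simp
  | @insert a C ha ih =>
    have h : condEntropy p (tupleOn g (insert a C)) W
        = condEntropy p (fun ω => (g a ω, tupleOn g C ω)) W := by
      apply condEntropy_congr
      intro ω ω'
      simp only [Prod.mk.injEq, tupleOn_eq_iff, Finset.forall_mem_insert]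
    rw [h, Finset.sum_insert ha]
    exact le_trans (condEntropy_subadd hp0 hp1 _ _ W) (by linarith)

end Lemmas2

/-- Let `Z_1, …, Z_n` be random variables (on a common finite
probability space with pmf `p`) and `f_1, …, f_n` deterministic functions on their
respective ranges.  Let `A, B, D ⊆ [n]` be pairwise disjoint subsets and `A' ⊆ A`,
`B' ⊆ B` be such that the random variables `(f_i(Z_i))_{i ∈ (A∪B)\(A'∪B')}` are mutually
conditionally independent given `f_D(Z_D)` (expressed by the entropy characterization:
the conditional entropy of the tuple equals the sum of the conditional entropies).  Then
`I(f_A(Z_A); f_B(Z_B) | f_D(Z_D)) ≤ H(f_{A'}(Z_{A'}) | f_D(Z_D)) + H(f_{B'}(Z_{B'}) | f_D(Z_D))`. -/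
theorem condMutualInfo_le_of_condIndep
    {Ω : Type*} [Fintype Ω] {n : ℕ} {S T : Fin n → Type*}
    (p : Ω → ℝ) (hp0 : ∀ ω, 0 ≤ p ω) (hp1 : ∑ ω, p ω = 1)
    (Z : (i : Fin n) → Ω → S i) (f : (i : Fin n) → S i → T i)
    (A B D A' B' : Finset (Fin n))
    (hAB : Disjoint A B) (hAD : Disjoint A D) (hBD : Disjoint B D)
    (hA' : A' ⊆ A) (hB' : B' ⊆ B)
    (hindep : condEntropy p
        (tupleOn (fun i ω => f i (Z i ω)) ((A ∪ B) \ (A' ∪ B')))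
        (tupleOn (fun i ω => f i (Z i ω)) D)
      = ∑ i ∈ (A ∪ B) \ (A' ∪ B'), condEntropy p (fun ω => f i (Z i ω))
          (tupleOn (fun i ω => f i (Z i ω)) D)) :
    condMI p (tupleOn (fun i ω => f i (Z i ω)) A)
        (tupleOn (fun i ω => f i (Z i ω)) B)
        (tupleOn (fun i ω => f i (Z i ω)) D)
      ≤ condEntropy p (tupleOn (fun i ω => f i (Z i ω)) A')
          (tupleOn (fun i ω => f i (Z i ω)) D)
        + condEntropy p (tupleOn (fun i ω => f i (Z i ω)) B')
            (tupleOn (fun i ω => f i (Z i ω)) D) := by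
  classical
  set g : (i : Fin n) → Ω → T i := fun i ω => f i (Z i ω) with hg
  set Dt : Ω → _ := tupleOn g D with hDt
  set E : Finset (Fin n) := (A ∪ B) \ (A' ∪ B') with hE
  -- pair ↔ union
  have hpair : condEntropy p (fun ω => (tupleOn g A ω, tupleOn g B ω)) Dt
      = condEntropy p (tupleOn g (A ∪ B)) Dt := by
    apply condEntropy_congr
    intro ω ω'
    simp only [Prod.mk.injEq, tupleOn_eq_iff, Finset.forall_mem_union]
  -- set equality
  have hEeq : E = (A \ A') ∪ (B \ B') := by
    rw [hE]
    ext i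
    simp only [Finset.mem_sdiff, Finset.mem_union]
    constructor
    · rintro ⟨hab, h'⟩
      rcases hab with h | h
      · exact Or.inl ⟨h, fun hh => h' (Or.inl hh)⟩
      · exact Or.inr ⟨h, fun hh => h' (Or.inr hh)⟩
    · rintro (⟨h, h'⟩ | ⟨h, h'⟩)
      · refine ⟨Or.inl h, ?_⟩
        rintro (hh | hh)
        · exact h' hh
        · exact (Finset.disjoint_left.mp hAB h) (hB' hh)
      · refine ⟨Or.inr h, ?_⟩
        rintro (hh | hh)
        · exact (Finset.disjoint_right.mp hAB h) (hA' hh)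
        · exact h' hh
  have hdisj : Disjoint (A \ A') (B \ B') :=
    hAB.mono Finset.sdiff_subset Finset.sdiff_subset
  have hindep' : condEntropy p (tupleOn g E) Dt = ∑ i ∈ E, condEntropy p (g i) Dt := hindep
  have hsum_split : ∑ i ∈ E, condEntropy p (g i) Dt
      = (∑ i ∈ A \ A', condEntropy p (g i) Dt) + ∑ i ∈ B \ B', condEntropy p (g i) Dt := by
    rw [hEeq, Finset.sum_union hdisj]
  have hmono : condEntropy p (tupleOn g E) Dt ≤ condEntropy p (tupleOn g (A ∪ B)) Dt := by
    apply condEntropy_tuple_mono hp0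
    rw [hE]
    exact Finset.sdiff_subset.trans (le_refl _)
  have hsplitA : condEntropy p (tupleOn g A) Dt
      ≤ condEntropy p (tupleOn g A') Dt + condEntropy p (tupleOn g (A \ A')) Dt := by
    conv_lhs => rw [← Finset.union_sdiff_of_subset hA']
    exact condEntropy_tuple_union hp0 hp1 g A' (A \ A') Dt
  have hsplitB : condEntropy p (tupleOn g B) Dt
      ≤ condEntropy p (tupleOn g B') Dt + condEntropy p (tupleOn g (B \ B')) Dt := by
    conv_lhs => rw [← Finset.union_sdiff_of_subset hB']
    exact condEntropy_tuple_union hp0 hp1 g B' (B \ B') Dt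
  have hsumA : condEntropy p (tupleOn g (A \ A')) Dt ≤ ∑ i ∈ A \ A', condEntropy p (g i) Dt :=
    condEntropy_tuple_le_sum hp0 hp1 g _ Dt
  have hsumB : condEntropy p (tupleOn g (B \ B')) Dt ≤ ∑ i ∈ B \ B', condEntropy p (g i) Dt :=
    condEntropy_tuple_le_sum hp0 hp1 g _ Dt
  unfold condMI
  rw [hpair]
  linarith
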